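/- Let δ > 1 be a Pisot or Salem number, ψ : ℚ(δ) → ℂ a non-identical embedding with η := ψ(δ) ∈ (0,1) real positive, and suppose all digits d_k lie in a set 𝒟 ⊂ ℚ(δ) with ψ(d) ≥ 0 for all d ∈ 𝒟. If x > 0 and x(δ^s − 1) = Σ_{k=D+1}^s d_k δ^{s−k} for some s > D ≥ 1, then applying ψ yields (η^s − 1)x = Σ_{k=D+1}^s ψ(d_k) η^{s−k}, where the left-hand side is negative and the right-hand side is nonnegative — a contradiction. Hence no such purely periodic expansion of a positive rational x exists when some non-identical embedding maps all digits to nonnegative reals with ψ(δ) ∈ (0,1). -/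

import Mathlib

/-- The element `δ` of `ℚ(δ)`. -/
noncomputable def deltaElem (δ : ℝ) : ↥(IntermediateField.adjoin ℚ {δ}) :=
  ⟨δ, IntermediateField.mem_adjoin_simple_self ℚ δ⟩

/-- Let `δ > 1` (Pisot or Salem), `ψ : ℚ(δ) → ℂ` a non-identical
embedding with `η = ψ(δ) ∈ (0,1)` real positive, and digits `d_k` with
`ψ(d_k)` real nonnegative. Then a positive rational `x` cannot satisfy the
purely periodic expansion equation `x(δ^s − 1) = Σ_{k=D+1}^s d_k δ^{s−k}`,
since applying `ψ` makes the left-hand side negative and the right-hand side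
nonnegative. -/
theorem stmt_16 (δ : ℝ) (hδ : 1 < δ) (hint : IsIntegral ℤ δ)
    (ψ : ↥(IntermediateField.adjoin ℚ {δ}) →ₐ[ℚ] ℂ)
    (η : ℝ) (hψδ : ψ (deltaElem δ) = (η : ℂ)) (hη0 : 0 < η) (hη1 : η < 1)
    (hnonid : (η : ℂ) ≠ (δ : ℂ))
    (D s : ℕ) (hD : 1 ≤ D) (hs : D < s)
    (d : ℕ → ↥(IntermediateField.adjoin ℚ {δ}))
    (hψd : ∀ k ∈ Finset.Icc (D + 1) s, ∃ t : ℝ, 0 ≤ t ∧ ψ (d k) = (t : ℂ))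
    (x : ℚ) (hx : 0 < x)
    (heq : (algebraMap ℚ _ x) * ((deltaElem δ) ^ s - 1) =
      ∑ k ∈ Finset.Icc (D + 1) s, d k * (deltaElem δ) ^ (s - k)) :
    False := by
  choose t ht0 htψ using hψd
  have h := congrArg ψ heq
  simp only [map_mul, map_sub, map_pow, map_one, map_sum, hψδ,
    AlgHom.commutes] at h
  have h' : ((x : ℝ) * (η ^ s - 1) : ℝ) =
      ((∑ k ∈ (Finset.Icc (D + 1) s).attach, t k k.2 * η ^ (s - (k : ℕ))) : ℝ) := by
    have : (((x : ℝ) * (η ^ s - 1) : ℝ) : ℂ) =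
        (((∑ k ∈ (Finset.Icc (D + 1) s).attach, t k k.2 * η ^ (s - (k : ℕ))) : ℝ) : ℂ) := by
      push_cast
      rw [eq_ratCast (algebraMap ℚ ℂ) x] at h
      rw [h, ← Finset.sum_attach (Finset.Icc (D + 1) s)
        (fun k => ψ (d k) * (η : ℂ) ^ (s - k))]
      exact Finset.sum_congr rfl fun k _ => by rw [htψ ↑k k.2]
    exact_mod_cast this
  have hlhs : (x : ℝ) * (η ^ s - 1) < 0 := by
    have hηs : η ^ s < 1 := pow_lt_one₀ hη0.le hη1 (by omega)
    have : (0 : ℝ) < (x : ℝ) := by exact_mod_cast hx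
    nlinarith
  have hrhs : 0 ≤ ∑ k ∈ (Finset.Icc (D + 1) s).attach, t k k.2 * η ^ (s - (k : ℕ)) :=
    Finset.sum_nonneg fun k _ => mul_nonneg (ht0 k k.2) (pow_nonneg hη0.le _)
  linarith [h' ▸ hlhs]
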